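/- Let K ≥ 3 be an integer. Consider complex channel coefficients: scalars h_{ki} ∈ ℂ for k,i ∈ {1,…,K}; vectors p_i ∈ ℂ^{K-1} for i ∈ {1,…,K}; and vectors q_k ∈ ℂ^{K-1} for k ∈ {1,…,K}. Then for almost every choice of these coefficients, there exist a nonzero matrix U ∈ ℂ^{(K-1)×(K-1)} and scalars λ_1, …, λ_K ∈ ℂ such that for every k ∈ {1,…,K}: (a) q_kᵀ·U·p_i = λ_k·h_{ki} for every i ≠ k; and (b) q_kᵀ·U·p_k ≠ λ_k·h_{kk}. -/

import Mathlib

open MeasureTheory Matrix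

set_option synthInstance.maxSize 512
set_option maxHeartbeats 1000000

namespace Cor4
open MvPolynomial

section framework
variable {ι κ : Type} {X Y : Type*} [MeasureSpace X] [MeasureSpace Y]

lemma measurable_mveval {ι : Type} (p : MvPolynomial ι ℂ) :
    Measurable (fun v : ι → ℂ => MvPolynomial.eval v p) := by
  induction p using MvPolynomial.induction_on with
  | C a => simpa using measurable_const
  | add p q hp hq => simp only [map_add]; exact hp.add hq
  | mul_X p i hp => simp only [map_mul, eval_X]; exact hp.mul (measurable_pi_apply i)

/-- A family of coordinates on a measure space such that nonzero polynomials in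
the coordinates have null zero sets. -/
def Good {ι : Type} {X : Type*} [MeasureSpace X] (c : ι → X → ℂ) : Prop :=
  (∀ i, Measurable (c i)) ∧
  ∀ p : MvPolynomial ι ℂ, p ≠ 0 →
    volume {x : X | MvPolynomial.eval (fun i => c i x) p = 0} = 0

lemma good_congr {ι : Type} {X : Type*} [MeasureSpace X] {c c' : ι → X → ℂ}
    (h : ∀ i x, c i x = c' i x) (hg : Good c) : Good c' := by
  have : c = c' := funext fun i => funext fun x => h i x
  rwa [← this]

lemma good_empty {ι : Type} {X : Type*} [MeasureSpace X] [IsEmpty ι] (c : ι → X → ℂ) :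
    Good c := by
  constructor
  · exact fun i => isEmptyElim i
  · intro p hp
    obtain ⟨a, rfl⟩ := MvPolynomial.C_surjective ι p
    have ha : a ≠ 0 := fun h => hp (by simp [h])
    simp [MvPolynomial.eval_C, ha]

lemma punit_eval (z : ℂ) (p : MvPolynomial PUnit ℂ) :
    MvPolynomial.eval (fun _ => z) p
      = Polynomial.eval z ((MvPolynomial.pUnitAlgEquiv ℂ) p) := by
  rw [Polynomial.eval, eval₂_const_pUnitAlgEquiv]
  rfl

lemma good_unit : Good (fun (_ : PUnit) (z : ℂ) => z) := by
  refine ⟨fun _ => measurable_id, fun p hp => ?_⟩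
  have hq : (MvPolynomial.pUnitAlgEquiv ℂ) p ≠ 0 :=
    fun h => hp ((map_eq_zero_iff _ (AlgEquiv.injective _)).1 h)
  have : {x : ℂ | MvPolynomial.eval (fun _ => x) p = 0} ⊆
      {x : ℂ | ((MvPolynomial.pUnitAlgEquiv ℂ) p).IsRoot x} := by
    intro x hx
    simp only [Set.mem_setOf_eq, Polynomial.IsRoot, ← punit_eval x p]
    exact hx
  exact measure_mono_null this ((Polynomial.finite_setOf_isRoot hq).measure_zero _)

lemma good_transfer (e : Y ≃ᵐ X) (he : MeasurePreserving e volume volume)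
    {c : ι → X → ℂ} (h : Good c) : Good (fun i y => c i (e y)) := by
  refine ⟨fun i => (h.1 i).comp e.measurable, fun p hp => ?_⟩
  have hmeas : MeasurableSet {x : X | MvPolynomial.eval (fun i => c i x) p = 0} := by
    have : Measurable fun x : X => MvPolynomial.eval (fun i => c i x) p :=
      (measurable_mveval p).comp (measurable_pi_lambda _ fun i => h.1 i)
    exact this (measurableSet_singleton 0)
  have : {y : Y | MvPolynomial.eval (fun i => c i (e y)) p = 0}
      = e ⁻¹' {x : X | MvPolynomial.eval (fun i => c i x) p = 0} := rfl
  rw [this, he.measure_preimage hmeas.nullMeasurableSet]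
  exact h.2 p hp

lemma good_reindex (r : κ ≃ ι) {c : ι → X → ℂ} (h : Good c) :
    Good (fun k x => c (r k) x) := by
  refine ⟨fun k => h.1 (r k), fun p hp => ?_⟩
  have hr : MvPolynomial.rename r p ≠ 0 :=
    fun hz => hp ((MvPolynomial.rename_injective _ r.injective) (by simpa using hz))
  have : ∀ x : X, MvPolynomial.eval (fun k => c (r k) x) p
      = MvPolynomial.eval (fun i => c i x) (MvPolynomial.rename r p) := by
    intro x; rw [MvPolynomial.eval_rename]; rfl
  simp only [this]
  exact h.2 _ hr

lemma prod_eval_eq (cX : ι → X → ℂ) (cY : κ → Y → ℂ) (p : MvPolynomial (ι ⊕ κ) ℂ)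
    (x : X) (y : Y) :
    MvPolynomial.eval (fun s => Sum.elim (fun a => cX a x) (fun b => cY b y) s) p
      = MvPolynomial.eval (fun b => cY b y)
          (MvPolynomial.map (MvPolynomial.eval (fun a => cX a x))
            ((MvPolynomial.sumAlgEquiv ℂ κ ι) (MvPolynomial.rename (Equiv.sumComm ι κ) p))) := by
  let f1 : MvPolynomial (ι ⊕ κ) ℂ →+* ℂ :=
    MvPolynomial.eval (fun s => Sum.elim (fun a => cX a x) (fun b => cY b y) s)
  let f2 : MvPolynomial (ι ⊕ κ) ℂ →+* ℂ :=
    ((MvPolynomial.eval (fun b => cY b y)).comp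
      (MvPolynomial.map (MvPolynomial.eval (fun a => cX a x)))).comp
      (((MvPolynomial.sumAlgEquiv ℂ κ ι).toRingEquiv.toRingHom).comp
        (MvPolynomial.rename (Equiv.sumComm ι κ)).toRingHom)
  have h : f1 = f2 := by
    apply MvPolynomial.ringHom_ext
    · intro a
      simp [f1, f2, sumAlgEquiv_C_inl, sumAlgEquiv_X_inl, sumAlgEquiv_X_inr]
    · rintro (i | b) <;>
        simp [f1, f2, sumAlgEquiv_C_inl, sumAlgEquiv_X_inl, sumAlgEquiv_X_inr]
  exact DFunLike.congr_fun h p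

lemma good_prod [SFinite (volume : Measure Y)]
    {cX : ι → X → ℂ} {cY : κ → Y → ℂ} (hX : Good cX) (hY : Good cY) :
    Good (fun (s : ι ⊕ κ) (z : X × Y) =>
      Sum.elim (fun a => cX a z.1) (fun b => cY b z.2) s) := by
  have hmc : ∀ s : ι ⊕ κ, Measurable (fun z : X × Y =>
      Sum.elim (fun a => cX a z.1) (fun b => cY b z.2) s) := by
    rintro (i | b)
    · exact (hX.1 i).comp measurable_fst
    · exact (hY.1 b).comp measurable_snd
  refine ⟨hmc, fun p hp => ?_⟩
  set q : MvPolynomial κ (MvPolynomial ι ℂ) :=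
    (MvPolynomial.sumAlgEquiv ℂ κ ι) (MvPolynomial.rename (Equiv.sumComm ι κ) p) with hqdef
  have hq : q ≠ 0 := by
    intro h
    apply hp
    have h1 : MvPolynomial.rename (Equiv.sumComm ι κ) p = 0 :=
      (map_eq_zero_iff _ (AlgEquiv.injective _)).1 h
    exact (MvPolynomial.rename_injective _ (Equiv.sumComm ι κ).injective)
      (by simpa using h1)
  obtain ⟨d, hd⟩ := MvPolynomial.ne_zero_iff.1 hq
  -- the zero set
  set s : Set (X × Y) := {z : X × Y |
    MvPolynomial.eval (fun s => Sum.elim (fun a => cX a z.1) (fun b => cY b z.2) s) p = 0}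
    with hsdef
  have hms : MeasurableSet s := by
    have : Measurable fun z : X × Y =>
        MvPolynomial.eval (fun s => Sum.elim (fun a => cX a z.1) (fun b => cY b z.2) s) p :=
      (measurable_mveval p).comp (measurable_pi_lambda _ fun s => hmc s)
    exact this (measurableSet_singleton 0)
  rw [Measure.volume_eq_prod, Measure.measure_prod_null hms]
  have hae : ∀ᵐ x ∂(volume : Measure X),
      MvPolynomial.eval (fun a => cX a x) (MvPolynomial.coeff d q) ≠ 0 := by
    have := hX.2 (MvPolynomial.coeff d q) hd
    rw [MeasureTheory.ae_iff]
    simpa using this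
  filter_upwards [hae] with x hx
  have hpx : MvPolynomial.map (MvPolynomial.eval (fun a => cX a x)) q ≠ 0 := by
    intro h
    apply hx
    have := congrArg (MvPolynomial.coeff d) h
    simpa [MvPolynomial.coeff_map] using this
  have : Prod.mk x ⁻¹' s = {y : Y | MvPolynomial.eval (fun b => cY b y)
      (MvPolynomial.map (MvPolynomial.eval (fun a => cX a x)) q) = 0} := by
    ext y
    simp only [hsdef, Set.mem_preimage, Set.mem_setOf_eq]
    rw [prod_eval_eq cX cY p x y, hqdef]
  rw [this]
  exact hY.2 _ hpx
/-- reindexing equivalence for the pi step -/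
def finSuccProd (N : ℕ) (ι : Type) : (Fin (N + 1) × ι) ≃ (ι ⊕ (Fin N × ι)) where
  toFun := fun ji => Fin.cases (Sum.inl ji.2) (fun j' => Sum.inr (j', ji.2)) ji.1
  invFun := Sum.elim (fun i => (0, i)) (fun p => (p.1.succ, p.2))
  left_inv := by
    rintro ⟨j, i⟩
    induction j using Fin.cases <;> simp
  right_inv := by
    rintro (i | ⟨j, i⟩) <;> simp

lemma good_pi [SigmaFinite (volume : Measure X)] {c : ι → X → ℂ} (h : Good c) (N : ℕ) :
    Good (fun (ji : Fin N × ι) (f : Fin N → X) => c ji.2 (f ji.1)) := by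
  induction N with
  | zero => exact good_empty _
  | succ N ih =>
    have hprod := good_prod h ih
    have h2 := good_reindex (finSuccProd N ι) hprod
    have h3 := good_transfer (MeasurableEquiv.piFinSuccAbove (fun _ : Fin (N + 1) => X) 0)
      (volume_preserving_piFinSuccAbove (fun _ : Fin (N + 1) => X) 0) h2
    refine good_congr (fun ji f => ?_) h3
    obtain ⟨j, i⟩ := ji
    induction j using Fin.cases with
    | zero => rfl
    | succ j' =>
      show c i _ = c i _
      rfl

end framework

variable {m : ℕ}

abbrev Om (m : ℕ) := (Fin (m+1) → Fin (m+1) → ℂ) ×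
  ((Fin (m+1) → Fin m → ℂ) × (Fin (m+1) → Fin m → ℂ))

abbrev Idx (m : ℕ) := (Fin (m+1) × (Fin (m+1) × Unit)) ⊕
  ((Fin (m+1) × (Fin m × Unit)) ⊕ (Fin (m+1) × (Fin m × Unit)))

def cOm (m : ℕ) : Idx m → Om m → ℂ := fun s ω =>
  Sum.elim (fun a => ω.1 a.1 a.2.1)
    (fun b => Sum.elim (fun b1 => ω.2.1 b1.1 b1.2.1) (fun b2 => ω.2.2 b2.1 b2.2.1) b) s

lemma good_cOm (m : ℕ) : Good (cOm m) := by
  have gC : Good (fun (_ : PUnit) (z : ℂ) => z) := good_unit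
  have gH := good_pi (good_pi gC (m+1)) (m+1)
  have gP := good_pi (good_pi gC m) (m+1)
  have g2 := good_prod gP gP
  have g3 := good_prod gH g2
  refine good_congr (fun i ω => ?_) g3
  rcases i with a | (b | b) <;> rfl

/-- Evaluation of `aeval` into a function algebra, pointwise. -/
lemma aeval_pi_apply {σ : Type} {Z : Type*} (g : σ → Z → ℂ) (p : MvPolynomial σ ℂ) (z : Z) :
    (MvPolynomial.aeval g p) z = MvPolynomial.eval (fun i => g i z) p := by
  induction p using MvPolynomial.induction_on with
  | C a => simp [MvPolynomial.algebraMap_eq, Pi.algebraMap_apply]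
  | add p q hp hq => simp [hp, hq]
  | mul_X p i hp => simp [hp]

lemma null_of_poly {m : ℕ} (F : Om m → ℂ)
    (hF : F ∈ Algebra.adjoin ℂ (Set.range (cOm m))) (x₀ : Om m) (h0 : F x₀ ≠ 0) :
    volume {ω : Om m | F ω = 0} = 0 := by
  have hF' : F ∈ (MvPolynomial.aeval (R := ℂ) (cOm m)).range := by
    rw [← Algebra.adjoin_range_eq_range_aeval]; exact hF
  obtain ⟨p, hp⟩ := hF'

  have hpω : ∀ ω, F ω = MvPolynomial.eval (fun i => cOm m i ω) p := by
    intro ω; rw [← hp]; exact (aeval_pi_apply (cOm m) p ω)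
  have hpne : p ≠ 0 := by
    rintro rfl
    apply h0
    rw [hpω x₀]; simp
  have : {ω : Om m | F ω = 0} = {ω : Om m | MvPolynomial.eval (fun i => cOm m i ω) p = 0} := by
    ext ω; simp [hpω ω]
  rw [this]
  exact (good_cOm m).2 p hpne
noncomputable def RC (q : Fin (m+1) → Fin m → ℂ) : Matrix (Fin m) (Fin m) ℂ :=
  Matrix.of fun a j => q a.castSucc j
noncomputable def SC (p : Fin (m+1) → Fin m → ℂ) : Matrix (Fin m) (Fin m) ℂ :=
  Matrix.of fun j i => p i.castSucc j
noncomputable def bC (p : Fin (m+1) → Fin m → ℂ) : Fin m → ℂ :=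
  (adjugate (SC p)).mulVec (p (Fin.last m))
noncomputable def aC (q : Fin (m+1) → Fin m → ℂ) : Fin m → ℂ :=
  (adjugate (RC q)ᵀ).mulVec (q (Fin.last m))
noncomputable def gC (H : Fin (m+1) → Fin (m+1) → ℂ) (p : Fin (m+1) → Fin m → ℂ) :
    Fin m → ℂ :=
  fun k => (SC p).det * H k.castSucc (Fin.last m) -
    ∑ i ∈ Finset.univ.erase k, H k.castSucc i.castSucc * bC p i
noncomputable def eC (H : Fin (m+1) → Fin (m+1) → ℂ) (p : Fin (m+1) → Fin m → ℂ) :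
    Fin m → ℂ :=
  fun k => gC H p k - H k.castSucc k.castSucc * bC p k
noncomputable def VC (H : Fin (m+1) → Fin (m+1) → ℂ) (p q : Fin (m+1) → Fin m → ℂ) :
    Matrix (Fin m) (Fin m) ℂ :=
  Matrix.of fun i k => bC p i * aC q k * H k.castSucc i.castSucc +
    (if i = k then aC q i * eC H p i else 0)
noncomputable def mCC (H : Fin (m+1) → Fin (m+1) → ℂ) (p q : Fin (m+1) → Fin m → ℂ) :
    Fin m → ℂ :=
  fun i => (RC q).det * bC p i * H (Fin.last m) i.castSucc
noncomputable def lamC (H : Fin (m+1) → Fin (m+1) → ℂ) (p q : Fin (m+1) → Fin m → ℂ) :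
    Fin m → ℂ :=
  (adjugate (VC H p q)).mulVec (mCC H p q)
noncomputable def c7C (H : Fin (m+1) → Fin (m+1) → ℂ) (p q : Fin (m+1) → Fin m → ℂ) : ℂ :=
  (∑ k, aC q k * lamC H p q k * H k.castSucc (Fin.last m)) -
    (RC q).det * (VC H p q).det * H (Fin.last m) (Fin.last m)
noncomputable def NC (H : Fin (m+1) → Fin (m+1) → ℂ) (p q : Fin (m+1) → Fin m → ℂ) :
    Matrix (Fin m) (Fin m) ℂ :=
  Matrix.of fun k i => if i = k then lamC H p q k * gC H p k / bC p k
    else lamC H p q k * H k.castSucc i.castSucc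

section scalars
variable (H : Fin (m+1) → Fin (m+1) → ℂ) (p q : Fin (m+1) → Fin m → ℂ)

lemma NC_mulVec_b (hb : ∀ k, bC p k ≠ 0) (k : Fin m) :
    ((NC H p q).mulVec (bC p)) k = lamC H p q k * ((SC p).det * H k.castSucc (Fin.last m)) := by
  have h0 : ((NC H p q).mulVec (bC p)) k = ∑ i, NC H p q k i * bC p i := rfl
  rw [h0, ← Finset.sum_erase_add _ _ (Finset.mem_univ k)]
  have h1 : ∀ i ∈ Finset.univ.erase k, NC H p q k i * bC p i
      = lamC H p q k * (H k.castSucc i.castSucc * bC p i) := by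
    intro i hi
    have hik : i ≠ k := Finset.ne_of_mem_erase hi
    simp only [NC, Matrix.of_apply, if_neg hik]
    ring
  rw [Finset.sum_congr rfl h1, ← Finset.mul_sum]
  have h2 : NC H p q k k * bC p k = lamC H p q k * gC H p k := by
    simp only [NC, Matrix.of_apply, if_pos rfl]
    exact div_mul_cancel₀ _ (hb k)
  rw [h2]
  simp only [gC]
  ring

lemma b_mul_aN (hb : ∀ k, bC p k ≠ 0) (i k : Fin m) :
    bC p i * (aC q k * NC H p q k i) = VC H p q i k * lamC H p q k := by
  by_cases hk : k = i
  · subst hk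
    simp only [NC, VC, Matrix.of_apply, eq_self_iff_true, if_true, eC]
    have h1 : bC p k * (aC q k * (lamC H p q k * gC H p k / bC p k))
        = aC q k * (lamC H p q k * gC H p k) := by
      calc bC p k * (aC q k * (lamC H p q k * gC H p k / bC p k))
          = aC q k * (lamC H p q k * gC H p k / bC p k * bC p k) := by ring
        _ = _ := by rw [div_mul_cancel₀ _ (hb k)]
    rw [h1]
    ring
  · have hik : i ≠ k := fun h => hk h.symm
    simp only [NC, VC, Matrix.of_apply, if_neg hk, if_neg hik]
    ring

lemma sum_aN (hb : ∀ k, bC p k ≠ 0) (i : Fin m) :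
    ∑ k, aC q k * NC H p q k i
      = (RC q).det * ((VC H p q).det * H (Fin.last m) i.castSucc) := by
  have hVl : (VC H p q).mulVec (lamC H p q) = (VC H p q).det • (mCC H p q) := by
    show (VC H p q).mulVec ((adjugate (VC H p q)).mulVec _) = _
    rw [Matrix.mulVec_mulVec, Matrix.mul_adjugate, Matrix.smul_mulVec,
      Matrix.one_mulVec]
  have hcomp : ∑ k, VC H p q i k * lamC H p q k
      = (VC H p q).det * ((RC q).det * bC p i * H (Fin.last m) i.castSucc) := by
    have h1 : ((VC H p q).mulVec (lamC H p q)) i = ∑ k, VC H p q i k * lamC H p q k := rfl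
    rw [← h1, hVl]
    simp [mCC, smul_eq_mul]
  have hmain : bC p i * ∑ k, aC q k * NC H p q k i
      = bC p i * ((RC q).det * ((VC H p q).det * H (Fin.last m) i.castSucc)) := by
    rw [Finset.mul_sum]
    calc ∑ k, bC p i * (aC q k * NC H p q k i)
        = ∑ k, VC H p q i k * lamC H p q k :=
          Finset.sum_congr rfl fun k _ => b_mul_aN H p q hb i k
      _ = (VC H p q).det * ((RC q).det * bC p i * H (Fin.last m) i.castSucc) := hcomp
      _ = bC p i * ((RC q).det * ((VC H p q).det * H (Fin.last m) i.castSucc)) := by ring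
  exact mul_left_cancel₀ (hb i) hmain

end scalars
theorem construct (hm : 0 < m) (H : Fin (m+1) → Fin (m+1) → ℂ)
    (p q : Fin (m+1) → Fin m → ℂ)
    (hR : (RC q).det ≠ 0) (hS : (SC p).det ≠ 0) (hb : ∀ k, bC p k ≠ 0)
    (hlam : ∀ k, lamC H p q k ≠ 0) (he : ∀ k, eC H p k ≠ 0)
    (h7 : c7C H p q ≠ 0) (hg0 : gC H p ⟨0, hm⟩ ≠ 0) :
    ∃ U : Matrix (Fin m) (Fin m) ℂ, U ≠ 0 ∧ ∃ lam : Fin (m+1) → ℂ,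
      ∀ k, (∀ i, i ≠ k → q k ⬝ᵥ U.mulVec (p i) = lam k * H k i) ∧
           q k ⬝ᵥ U.mulVec (p k) ≠ lam k * H k k := by
  classical
  have hRu : IsUnit (RC q).det := isUnit_iff_ne_zero.2 hR
  have hSu : IsUnit (SC p).det := isUnit_iff_ne_zero.2 hS
  set U : Matrix (Fin m) (Fin m) ℂ := (RC q)⁻¹ * NC H p q * (SC p)⁻¹ with hUdef
  have hRUS : RC q * (U * SC p) = NC H p q := by
    rw [hUdef]
    calc RC q * ((RC q)⁻¹ * NC H p q * (SC p)⁻¹ * SC p)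
        = RC q * ((RC q)⁻¹ * NC H p q * ((SC p)⁻¹ * SC p)) := by
          rw [Matrix.mul_assoc ((RC q)⁻¹ * NC H p q) (SC p)⁻¹ (SC p)]
      _ = RC q * ((RC q)⁻¹ * NC H p q) := by
          rw [Matrix.nonsing_inv_mul (SC p) hSu, Matrix.mul_one]
      _ = (RC q * (RC q)⁻¹) * NC H p q := by rw [Matrix.mul_assoc]
      _ = NC H p q := by rw [Matrix.mul_nonsing_inv (RC q) hRu, Matrix.one_mul]
  have hpb : (SC p).mulVec (bC p) = (SC p).det • p (Fin.last m) := by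
    show (SC p).mulVec ((adjugate (SC p)).mulVec _) = _
    rw [Matrix.mulVec_mulVec, Matrix.mul_adjugate, Matrix.smul_mulVec,
      Matrix.one_mulVec]
  have hqa : Matrix.vecMul (aC q) (RC q) = (RC q).det • q (Fin.last m) := by
    have h1 : Matrix.vecMul (aC q) (RC q) = (RC q)ᵀ.mulVec (aC q) :=
      (Matrix.mulVec_transpose (RC q) (aC q)).symm
    rw [h1]
    show (RC q)ᵀ.mulVec ((adjugate (RC q)ᵀ).mulVec _) = _
    rw [Matrix.mulVec_mulVec, Matrix.mul_adjugate, Matrix.det_transpose,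
      Matrix.smul_mulVec, Matrix.one_mulVec]
  have hplast : p (Fin.last m) = ((SC p).det)⁻¹ • (SC p).mulVec (bC p) := by
    rw [hpb, smul_smul, inv_mul_cancel₀ hS, one_smul]
  have hqlast : q (Fin.last m) = ((RC q).det)⁻¹ • Matrix.vecMul (aC q) (RC q) := by
    rw [hqa, smul_smul, inv_mul_cancel₀ hR, one_smul]
  -- entry values
  have hval1 : ∀ k i : Fin m, q k.castSucc ⬝ᵥ U.mulVec (p i.castSucc) = NC H p q k i := by
    intro k i
    have h1 : q k.castSucc ⬝ᵥ U.mulVec (p i.castSucc) = (RC q * (U * SC p)) k i := by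
      simp only [Matrix.mul_apply, Matrix.mulVec, dotProduct, RC, SC,
        Matrix.of_apply]
    rw [h1, hRUS]
  have dot_row : ∀ (M : Matrix (Fin m) (Fin m) ℂ) (k : Fin m) (w : Fin m → ℂ),
      q k.castSucc ⬝ᵥ M.mulVec w = ((RC q * M).mulVec w) k := by
    intro M k w
    simp only [Matrix.mul_apply, Matrix.mulVec, dotProduct, RC,
      Matrix.of_apply, Finset.mul_sum, Finset.sum_mul]
    rw [Finset.sum_comm]
    exact Finset.sum_congr rfl fun l _ => Finset.sum_congr rfl fun j _ => by ring
  have vecMul_dot : ∀ (M : Matrix (Fin m) (Fin m) ℂ) (w : Fin m → ℂ),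
      (Matrix.vecMul (aC q) (RC q)) ⬝ᵥ M.mulVec w = aC q ⬝ᵥ ((RC q * M).mulVec w) := by
    intro M w
    rw [Matrix.dotProduct_mulVec, Matrix.vecMul_vecMul, ← Matrix.dotProduct_mulVec]
  have hvalB : ∀ k : Fin m, q k.castSucc ⬝ᵥ U.mulVec (p (Fin.last m))
      = lamC H p q k * H k.castSucc (Fin.last m) := by
    intro k
    rw [hplast, Matrix.mulVec_smul, dotProduct_smul]
    have h1 : q k.castSucc ⬝ᵥ U.mulVec ((SC p).mulVec (bC p))
        = ((NC H p q).mulVec (bC p)) k := by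
      rw [Matrix.mulVec_mulVec, dot_row, ← Matrix.mul_assoc, Matrix.mul_assoc, hRUS]
    rw [h1, NC_mulVec_b H p q hb k, smul_eq_mul]
    field_simp
  have hvalC : ∀ i : Fin m, q (Fin.last m) ⬝ᵥ U.mulVec (p i.castSucc)
      = (VC H p q).det * H (Fin.last m) i.castSucc := by
    intro i
    rw [hqlast, smul_dotProduct]
    have h1 : Matrix.vecMul (aC q) (RC q) ⬝ᵥ U.mulVec (p i.castSucc)
        = ∑ k, aC q k * NC H p q k i := by
      have h2 : U.mulVec (p i.castSucc) = U.mulVec (fun l => SC p l i) := rfl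
      rw [h2, vecMul_dot]
      have h3 : (RC q * U).mulVec (fun l => SC p l i) = fun j => NC H p q j i := by
        funext j
        have h4 : ((RC q * U).mulVec (fun l => SC p l i)) j = ((RC q * U) * SC p) j i := by
          simp [Matrix.mul_apply, Matrix.mulVec, dotProduct]
        rw [h4, Matrix.mul_assoc, hRUS]
      rw [h3]
      rfl
    rw [h1, sum_aN H p q hb i, smul_eq_mul]
    field_simp
  have hvalD : q (Fin.last m) ⬝ᵥ U.mulVec (p (Fin.last m))
      = ((RC q).det)⁻¹ * ∑ k, aC q k * lamC H p q k * H k.castSucc (Fin.last m) := by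
    rw [hqlast, hplast, smul_dotProduct, Matrix.mulVec_smul,
      dotProduct_smul]
    have h1 : Matrix.vecMul (aC q) (RC q) ⬝ᵥ U.mulVec ((SC p).mulVec (bC p))
        = aC q ⬝ᵥ ((NC H p q).mulVec (bC p)) := by
      rw [Matrix.mulVec_mulVec, vecMul_dot, ← Matrix.mul_assoc, Matrix.mul_assoc, hRUS]
    rw [h1]
    have h2 : aC q ⬝ᵥ ((NC H p q).mulVec (bC p))
        = (SC p).det * ∑ k, aC q k * lamC H p q k * H k.castSucc (Fin.last m) := by
      have h3 : aC q ⬝ᵥ ((NC H p q).mulVec (bC p))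
          = ∑ k, aC q k * ((NC H p q).mulVec (bC p)) k := rfl
      rw [h3, Finset.mul_sum]
      refine Finset.sum_congr rfl fun k _ => ?_
      rw [NC_mulVec_b H p q hb k]
      ring
    rw [h2, smul_eq_mul, smul_eq_mul]
    field_simp
  refine ⟨U, ?_, Fin.lastCases ((VC H p q).det) (lamC H p q), ?_⟩
  · intro hU0
    have hN0 : NC H p q = 0 := by rw [← hRUS, hU0, Matrix.zero_mul, Matrix.mul_zero]
    have h00 : NC H p q ⟨0, hm⟩ ⟨0, hm⟩ = 0 := by rw [hN0]; rfl
    simp only [NC, Matrix.of_apply, eq_self_iff_true, if_true] at h00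
    rcases div_eq_zero_iff.1 h00 with h | h
    · rcases mul_eq_zero.1 h with h' | h'
      · exact hlam _ h'
      · exact hg0 h'
    · exact hb _ h
  · intro k
    induction k using Fin.lastCases with
    | last =>
      constructor
      · intro i
        induction i using Fin.lastCases with
        | last => intro hi; exact absurd rfl hi
        | cast i =>
          intro _
          rw [hvalC i]
          simp only [Fin.lastCases_last]
      · rw [hvalD]
        simp only [Fin.lastCases_last]
        intro hcon
        apply h7
        have : (RC q).det * (((RC q).det)⁻¹
            * ∑ k, aC q k * lamC H p q k * H k.castSucc (Fin.last m))
            = (RC q).det * ((VC H p q).det * H (Fin.last m) (Fin.last m)) := by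
          rw [hcon]
        rw [← mul_assoc, mul_inv_cancel₀ hR, one_mul] at this
        simp only [c7C, this]
        ring
    | cast k =>
      constructor
      · intro i
        induction i using Fin.lastCases with
        | last =>
          intro _
          rw [hvalB k]
          simp only [Fin.lastCases_castSucc]
        | cast i =>
          intro hi
          have hik : i ≠ k := fun h => hi (by rw [h])
          rw [hval1 k i]
          simp only [Fin.lastCases_castSucc, NC, Matrix.of_apply, if_neg hik]
      · rw [hval1 k k]
        simp only [Fin.lastCases_castSucc]
        simp only [NC, Matrix.of_apply, eq_self_iff_true, if_true]
        intro hcon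
        apply he k
        have h5 : lamC H p q k * gC H p k = lamC H p q k * (H k.castSucc k.castSucc * bC p k) := by
          have := congrArg (· * bC p k) hcon
          simpa [div_mul_cancel₀ _ (hb k), mul_assoc] using this
        have h6 : gC H p k = H k.castSucc k.castSucc * bC p k :=
          mul_left_cancel₀ (hlam k) h5
        simp [eC, h6]
/-- the subalgebra of polynomial functions of the channel coefficients -/
noncomputable def SAlg (m : ℕ) : Subalgebra ℂ (Om m → ℂ) := Algebra.adjoin ℂ (Set.range (cOm m))

def HA (k i : Fin (m+1)) : Om m → ℂ := fun ω => ω.1 k i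
def pA (i : Fin (m+1)) (j : Fin m) : Om m → ℂ := fun ω => ω.2.1 i j
def qA (k : Fin (m+1)) (j : Fin m) : Om m → ℂ := fun ω => ω.2.2 k j

lemma HA_mem (k i : Fin (m+1)) : HA k i ∈ SAlg m :=
  Algebra.subset_adjoin ⟨Sum.inl (k, i, ()), rfl⟩
lemma pA_mem (i : Fin (m+1)) (j : Fin m) : pA i j ∈ SAlg m :=
  Algebra.subset_adjoin ⟨Sum.inr (Sum.inl (i, j, ())), rfl⟩
lemma qA_mem (k : Fin (m+1)) (j : Fin m) : qA k j ∈ SAlg m :=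
  Algebra.subset_adjoin ⟨Sum.inr (Sum.inr (k, j, ())), rfl⟩

lemma det_mem {n : ℕ} {M : Matrix (Fin n) (Fin n) (Om m → ℂ)}
    (h : ∀ i j, M i j ∈ SAlg m) : M.det ∈ SAlg m := by
  rw [Matrix.det_apply]
  exact Subalgebra.sum_mem _ fun σ _ =>
    Subalgebra.zsmul_mem _ (Subalgebra.prod_mem _ fun i _ => h _ _) _

lemma adjugate_mem {n : ℕ} {M : Matrix (Fin n) (Fin n) (Om m → ℂ)}
    (h : ∀ i j, M i j ∈ SAlg m) (i j : Fin n) : adjugate M i j ∈ SAlg m := by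
  rw [Matrix.adjugate_apply]
  apply det_mem
  intro k l
  rw [Matrix.updateRow_apply]
  split_ifs
  · rw [Pi.single_apply]
    split_ifs
    · exact one_mem _
    · exact zero_mem _
  · exact h _ _

-- A-level objects
noncomputable def RAm : Matrix (Fin m) (Fin m) (Om m → ℂ) :=
  Matrix.of fun a j => qA a.castSucc j
noncomputable def SAm : Matrix (Fin m) (Fin m) (Om m → ℂ) :=
  Matrix.of fun j i => pA i.castSucc j
noncomputable def bA : Fin m → (Om m → ℂ) :=
  (adjugate SAm).mulVec (fun j => pA (Fin.last m) j)
noncomputable def aA : Fin m → (Om m → ℂ) :=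
  (adjugate RAmᵀ).mulVec (fun j => qA (Fin.last m) j)
noncomputable def gA : Fin m → (Om m → ℂ) := fun k =>
  SAm.det * HA k.castSucc (Fin.last m) -
    ∑ i ∈ Finset.univ.erase k, HA k.castSucc i.castSucc * bA i
noncomputable def eA : Fin m → (Om m → ℂ) := fun k =>
  gA k - HA k.castSucc k.castSucc * bA k
noncomputable def VAm : Matrix (Fin m) (Fin m) (Om m → ℂ) :=
  Matrix.of fun i k => bA i * aA k * HA k.castSucc i.castSucc +
    (if i = k then aA i * eA i else 0)
noncomputable def mA : Fin m → (Om m → ℂ) := fun i =>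
  RAm.det * bA i * HA (Fin.last m) i.castSucc
noncomputable def lamA : Fin m → (Om m → ℂ) :=
  (adjugate VAm).mulVec mA
noncomputable def c7A : Om m → ℂ :=
  (∑ k, aA k * lamA k * HA k.castSucc (Fin.last m)) -
    RAm.det * VAm.det * HA (Fin.last m) (Fin.last m)

lemma RAm_mem : ∀ i j, (RAm (m := m)) i j ∈ SAlg m := fun i j => qA_mem _ _
lemma SAm_mem : ∀ i j, (SAm (m := m)) i j ∈ SAlg m := fun i j => pA_mem _ _
lemma bA_mem (k : Fin m) : bA k ∈ SAlg m := by
  have h : bA (m := m) k = ∑ j, adjugate SAm k j * pA (Fin.last m) j := rfl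
  rw [h]
  exact Subalgebra.sum_mem _ fun j _ =>
    mul_mem (adjugate_mem SAm_mem k j) (pA_mem _ _)
lemma aA_mem (k : Fin m) : aA k ∈ SAlg m := by
  have h : aA (m := m) k = ∑ j, adjugate RAmᵀ k j * qA (Fin.last m) j := rfl
  rw [h]
  exact Subalgebra.sum_mem _ fun j _ =>
    mul_mem (adjugate_mem (fun i j => RAm_mem j i) k j) (qA_mem _ _)
lemma gA_mem (k : Fin m) : gA k ∈ SAlg m :=
  sub_mem (mul_mem (det_mem SAm_mem) (HA_mem _ _))
    (Subalgebra.sum_mem _ fun i _ => mul_mem (HA_mem _ _) (bA_mem i))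
lemma eA_mem (k : Fin m) : eA k ∈ SAlg m :=
  sub_mem (gA_mem k) (mul_mem (HA_mem _ _) (bA_mem k))
lemma VAm_mem : ∀ i j, (VAm (m := m)) i j ∈ SAlg m := by
  intro i j
  refine add_mem (mul_mem (mul_mem (bA_mem i) (aA_mem j)) (HA_mem _ _)) ?_
  split_ifs
  · exact mul_mem (aA_mem i) (eA_mem i)
  · exact zero_mem _
lemma mA_mem (i : Fin m) : mA i ∈ SAlg m :=
  mul_mem (mul_mem (det_mem RAm_mem) (bA_mem i)) (HA_mem _ _)
lemma lamA_mem (k : Fin m) : lamA k ∈ SAlg m := by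
  have h : lamA (m := m) k = ∑ j, adjugate VAm k j * mA j := rfl
  rw [h]
  exact Subalgebra.sum_mem _ fun j _ => mul_mem (adjugate_mem VAm_mem k j) (mA_mem j)
lemma c7A_mem : c7A (m := m) ∈ SAlg m :=
  sub_mem (Subalgebra.sum_mem _ fun k _ =>
      mul_mem (mul_mem (aA_mem k) (lamA_mem k)) (HA_mem _ _))
    (mul_mem (mul_mem (det_mem RAm_mem) (det_mem VAm_mem)) (HA_mem _ _))
-- transport
noncomputable def evR (ω : Om m) : (Om m → ℂ) →+* ℂ := Pi.evalRingHom (fun _ => ℂ) ω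

lemma Smap_eq (ω : Om m) : SAm.map (evR ω) = SC ω.2.1 := by ext i j; rfl
lemma Rmap_eq (ω : Om m) : RAm.map (evR ω) = RC ω.2.2 := by ext i j; rfl

lemma Sdet_eq (ω : Om m) : SAm.det ω = (SC ω.2.1).det := by
  have h := RingHom.map_det (evR ω) SAm
  rw [RingHom.mapMatrix_apply, Smap_eq] at h
  exact h
lemma Rdet_eq (ω : Om m) : RAm.det ω = (RC ω.2.2).det := by
  have h := RingHom.map_det (evR ω) RAm
  rw [RingHom.mapMatrix_apply, Rmap_eq] at h
  exact h
lemma Sadj_eq (ω : Om m) (i j : Fin m) :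
    adjugate SAm i j ω = adjugate (SC ω.2.1) i j := by
  have h := RingHom.map_adjugate (evR ω) SAm
  rw [RingHom.mapMatrix_apply, RingHom.mapMatrix_apply, Smap_eq] at h
  exact congrFun (congrFun (congrArg (fun M => (M : Matrix _ _ ℂ)) h) i) j
lemma Radj_eq (ω : Om m) (i j : Fin m) :
    adjugate RAmᵀ i j ω = adjugate (RC ω.2.2)ᵀ i j := by
  have h := RingHom.map_adjugate (evR ω) RAmᵀ
  rw [RingHom.mapMatrix_apply, RingHom.mapMatrix_apply] at h
  have h2 : (RAmᵀ).map (evR ω) = (RC ω.2.2)ᵀ := by ext i j; rfl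
  rw [h2] at h
  exact congrFun (congrFun (congrArg (fun M => (M : Matrix _ _ ℂ)) h) i) j
lemma bA_eq (ω : Om m) (k : Fin m) : bA k ω = bC ω.2.1 k := by
  have h : bA (m := m) k ω = ∑ j, adjugate SAm k j ω * ω.2.1 (Fin.last m) j := by
    show (∑ j, adjugate SAm k j * pA (Fin.last m) j) ω = _
    rw [Finset.sum_apply]
    rfl
  rw [h]
  have h2 : bC ω.2.1 k = ∑ j, adjugate (SC ω.2.1) k j * ω.2.1 (Fin.last m) j := rfl
  rw [h2]
  exact Finset.sum_congr rfl fun j _ => by rw [Sadj_eq]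
lemma aA_eq (ω : Om m) (k : Fin m) : aA k ω = aC ω.2.2 k := by
  have h : aA (m := m) k ω = ∑ j, adjugate RAmᵀ k j ω * ω.2.2 (Fin.last m) j := by
    show (∑ j, adjugate RAmᵀ k j * qA (Fin.last m) j) ω = _
    rw [Finset.sum_apply]
    rfl
  rw [h]
  have h2 : aC ω.2.2 k = ∑ j, adjugate (RC ω.2.2)ᵀ k j * ω.2.2 (Fin.last m) j := rfl
  rw [h2]
  exact Finset.sum_congr rfl fun j _ => by rw [Radj_eq]
lemma gA_eq (ω : Om m) (k : Fin m) : gA k ω = gC ω.1 ω.2.1 k := by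
  show ((SAm.det * HA k.castSucc (Fin.last m) -
    ∑ i ∈ Finset.univ.erase k, HA k.castSucc i.castSucc * bA i : Om m → ℂ)) ω = _
  rw [Pi.sub_apply, Pi.mul_apply, Finset.sum_apply, Sdet_eq]
  have : ∀ i ∈ Finset.univ.erase k,
      (HA k.castSucc i.castSucc * bA i) ω = ω.1 k.castSucc i.castSucc * bC ω.2.1 i := by
    intro i _
    rw [Pi.mul_apply, bA_eq]
    rfl
  rw [Finset.sum_congr rfl this]
  rfl
lemma eA_eq (ω : Om m) (k : Fin m) : eA k ω = eC ω.1 ω.2.1 k := by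
  show ((gA k - HA k.castSucc k.castSucc * bA k : Om m → ℂ)) ω = _
  rw [Pi.sub_apply, Pi.mul_apply, gA_eq, bA_eq]
  rfl
lemma Vmap_eq (ω : Om m) : VAm.map (evR ω) = VC ω.1 ω.2.1 ω.2.2 := by
  ext i k
  show ((bA i * aA k * HA k.castSucc i.castSucc +
    (if i = k then aA i * eA i else 0) : Om m → ℂ)) ω = _
  rw [Pi.add_apply, Pi.mul_apply, Pi.mul_apply, bA_eq, aA_eq]
  have h : (if i = k then aA i * eA i else (0 : Om m → ℂ)) ω
      = if i = k then aC ω.2.2 i * eC ω.1 ω.2.1 i else 0 := by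
    split_ifs
    · rw [Pi.mul_apply, aA_eq, eA_eq]
    · rfl
  rw [h]
  rfl
lemma Vdet_eq (ω : Om m) : VAm.det ω = (VC ω.1 ω.2.1 ω.2.2).det := by
  have h := RingHom.map_det (evR ω) VAm
  rw [RingHom.mapMatrix_apply, Vmap_eq] at h
  exact h
lemma Vadj_eq (ω : Om m) (i j : Fin m) :
    adjugate VAm i j ω = adjugate (VC ω.1 ω.2.1 ω.2.2) i j := by
  have h := RingHom.map_adjugate (evR ω) VAm
  rw [RingHom.mapMatrix_apply, RingHom.mapMatrix_apply, Vmap_eq] at h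
  exact congrFun (congrFun (congrArg (fun M => (M : Matrix _ _ ℂ)) h) i) j
lemma mA_eq (ω : Om m) (i : Fin m) : mA i ω = mCC ω.1 ω.2.1 ω.2.2 i := by
  show ((RAm.det * bA i * HA (Fin.last m) i.castSucc : Om m → ℂ)) ω = _
  rw [Pi.mul_apply, Pi.mul_apply, Rdet_eq, bA_eq]
  rfl
lemma lamA_eq (ω : Om m) (k : Fin m) : lamA k ω = lamC ω.1 ω.2.1 ω.2.2 k := by
  have h : lamA (m := m) k ω = ∑ j, adjugate VAm k j ω * mA j ω := by
    show (∑ j, adjugate VAm k j * mA j) ω = _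
    rw [Finset.sum_apply]
    rfl
  rw [h]
  have h2 : lamC ω.1 ω.2.1 ω.2.2 k
      = ∑ j, adjugate (VC ω.1 ω.2.1 ω.2.2) k j * mCC ω.1 ω.2.1 ω.2.2 j := rfl
  rw [h2]
  exact Finset.sum_congr rfl fun j _ => by rw [Vadj_eq, mA_eq]
lemma c7A_eq (ω : Om m) : c7A ω = c7C ω.1 ω.2.1 ω.2.2 := by
  show (((∑ k, aA k * lamA k * HA k.castSucc (Fin.last m)) -
    RAm.det * VAm.det * HA (Fin.last m) (Fin.last m) : Om m → ℂ)) ω = _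
  rw [Pi.sub_apply, Finset.sum_apply, Pi.mul_apply, Pi.mul_apply, Rdet_eq, Vdet_eq]
  have : ∀ k ∈ Finset.univ, (aA k * lamA k * HA k.castSucc (Fin.last m)) ω
      = aC ω.2.2 k * lamC ω.1 ω.2.1 ω.2.2 k * ω.1 k.castSucc (Fin.last m) := by
    intro k _
    rw [Pi.mul_apply, Pi.mul_apply, aA_eq, lamA_eq]
    rfl
  rw [Finset.sum_congr rfl this]
  rfl
-- the witness point
noncomputable def H0 (m : ℕ) : Fin (m+1) → Fin (m+1) → ℂ := fun k i =>
  if k = Fin.last m then (if i = Fin.last m then 0 else 1)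
  else (if i = Fin.last m then 1 else 0)
noncomputable def pq0 (m : ℕ) : Fin (m+1) → Fin m → ℂ := fun i j =>
  if i = Fin.last m then 1 else (if (j : ℕ) = (i : ℕ) then 1 else 0)

lemma R0_eq : RC (pq0 m) = 1 := by
  ext a j
  simp only [RC, Matrix.of_apply, pq0, Matrix.one_apply, Fin.coe_castSucc]
  rw [if_neg (Fin.castSucc_lt_last a).ne]
  by_cases h : a = j
  · subst h; simp
  · rw [if_neg h, if_neg]
    intro hc
    exact h (Fin.ext hc.symm)

lemma S0_eq : SC (pq0 m) = 1 := by
  ext j i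
  simp only [SC, Matrix.of_apply, pq0, Matrix.one_apply, Fin.coe_castSucc]
  rw [if_neg (Fin.castSucc_lt_last i).ne]
  by_cases h : j = i
  · subst h; simp
  · rw [if_neg (fun hc => h (Fin.ext hc)), if_neg h]

lemma b0_eq : bC (pq0 m) = fun _ => 1 := by
  funext k
  simp only [bC, S0_eq, adjugate_one, one_mulVec]
  simp [pq0]

lemma a0_eq : aC (pq0 m) = fun _ => 1 := by
  funext k
  simp only [aC, R0_eq, transpose_one, adjugate_one, one_mulVec]
  simp [pq0]

lemma H0_cc (k i : Fin m) : H0 m k.castSucc i.castSucc = 0 := by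
  simp [H0, (Fin.castSucc_lt_last k).ne, (Fin.castSucc_lt_last i).ne]
lemma H0_cl (k : Fin m) : H0 m k.castSucc (Fin.last m) = 1 := by
  simp [H0, (Fin.castSucc_lt_last k).ne]
lemma H0_lc (i : Fin m) : H0 m (Fin.last m) i.castSucc = 1 := by
  simp [H0, (Fin.castSucc_lt_last i).ne]
lemma H0_ll : H0 m (Fin.last m) (Fin.last m) = 0 := by simp [H0]

lemma g0_eq : gC (H0 m) (pq0 m) = fun _ => 1 := by
  funext k
  simp only [gC, S0_eq, Matrix.det_one, H0_cl, b0_eq, H0_cc]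
  simp

lemma e0_eq : eC (H0 m) (pq0 m) = fun _ => 1 := by
  funext k
  simp only [eC, g0_eq, H0_cc, b0_eq]
  simp

lemma V0_eq : VC (H0 m) (pq0 m) (pq0 m) = 1 := by
  ext i k
  simp only [VC, Matrix.of_apply, b0_eq, a0_eq, e0_eq, H0_cc, Matrix.one_apply]
  by_cases h : i = k <;> simp [h]

lemma m0_eq : mCC (H0 m) (pq0 m) (pq0 m) = fun _ => 1 := by
  funext i
  simp only [mCC, R0_eq, Matrix.det_one, b0_eq, H0_lc]
  simp

lemma lam0_eq : lamC (H0 m) (pq0 m) (pq0 m) = fun _ => 1 := by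
  funext k
  simp only [lamC, V0_eq, adjugate_one, one_mulVec, m0_eq]

lemma c70_eq : c7C (H0 m) (pq0 m) (pq0 m) = (m : ℂ) := by
  simp only [c7C, a0_eq, lam0_eq, H0_cl, R0_eq, V0_eq, Matrix.det_one, H0_ll]
  simp


lemma ae_ne {F : Om m → ℂ} (hF : F ∈ SAlg m) (x₀ : Om m) (h0 : F x₀ ≠ 0) :
    ∀ᵐ ω : Om m, F ω ≠ 0 := by
  rw [MeasureTheory.ae_iff]
  have h1 : {ω : Om m | ¬ F ω ≠ 0} = {ω : Om m | F ω = 0} := by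
    ext ω; simp
  rw [h1]
  exact null_of_poly F hF x₀ h0

noncomputable def w0 (m : ℕ) : Om m := (H0 m, pq0 m, pq0 m)

theorem main_aux (m : ℕ) (hm : 0 < m) :
    ∀ᵐ hpq ∂(volume : Measure (Om m)),
      ∃ U : Matrix (Fin m) (Fin m) ℂ, U ≠ 0 ∧
        ∃ lam : Fin (m+1) → ℂ,
          ∀ k : Fin (m+1),
            (∀ i, i ≠ k →
              hpq.2.2 k ⬝ᵥ U.mulVec (hpq.2.1 i) = lam k * hpq.1 k i) ∧
            hpq.2.2 k ⬝ᵥ U.mulVec (hpq.2.1 k) ≠ lam k * hpq.1 k k := by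
  have hmne : (m : ℂ) ≠ 0 := Nat.cast_ne_zero.2 hm.ne'
  have h1 : ∀ᵐ ω : Om m, RAm.det ω ≠ 0 := by
    refine ae_ne (det_mem RAm_mem) (w0 m) ?_
    rw [Rdet_eq]
    show (RC (pq0 m)).det ≠ 0
    rw [R0_eq, Matrix.det_one]
    exact one_ne_zero
  have h2 : ∀ᵐ ω : Om m, SAm.det ω ≠ 0 := by
    refine ae_ne (det_mem SAm_mem) (w0 m) ?_
    rw [Sdet_eq]
    show (SC (pq0 m)).det ≠ 0
    rw [S0_eq, Matrix.det_one]
    exact one_ne_zero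
  have h3 : ∀ᵐ ω : Om m, ∀ k, bA k ω ≠ 0 := by
    rw [MeasureTheory.ae_all_iff]
    intro k
    refine ae_ne (bA_mem k) (w0 m) ?_
    rw [bA_eq]
    show bC (pq0 m) k ≠ 0
    rw [b0_eq]
    exact one_ne_zero
  have h4 : ∀ᵐ ω : Om m, ∀ k, lamA k ω ≠ 0 := by
    rw [MeasureTheory.ae_all_iff]
    intro k
    refine ae_ne (lamA_mem k) (w0 m) ?_
    rw [lamA_eq]
    show lamC (H0 m) (pq0 m) (pq0 m) k ≠ 0
    rw [lam0_eq]
    exact one_ne_zero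
  have h5 : ∀ᵐ ω : Om m, ∀ k, eA k ω ≠ 0 := by
    rw [MeasureTheory.ae_all_iff]
    intro k
    refine ae_ne (eA_mem k) (w0 m) ?_
    rw [eA_eq]
    show eC (H0 m) (pq0 m) k ≠ 0
    rw [e0_eq]
    exact one_ne_zero
  have h6 : ∀ᵐ ω : Om m, c7A ω ≠ 0 := by
    refine ae_ne c7A_mem (w0 m) ?_
    rw [c7A_eq]
    show c7C (H0 m) (pq0 m) (pq0 m) ≠ 0
    rw [c70_eq]
    exact hmne
  have h7 : ∀ᵐ ω : Om m, gA ⟨0, hm⟩ ω ≠ 0 := by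
    refine ae_ne (gA_mem _) (w0 m) ?_
    rw [gA_eq]
    show gC (H0 m) (pq0 m) ⟨0, hm⟩ ≠ 0
    rw [g0_eq]
    exact one_ne_zero
  filter_upwards [h1, h2, h3, h4, h5, h6, h7] with ω hω1 hω2 hω3 hω4 hω5 hω6 hω7
  refine construct hm ω.1 ω.2.1 ω.2.2 ?_ ?_ ?_ ?_ ?_ ?_ ?_
  · rw [← Rdet_eq]; exact hω1
  · rw [← Sdet_eq]; exact hω2
  · intro k; rw [← bA_eq]; exact hω3 k
  · intro k; rw [← lamA_eq]; exact hω4 k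
  · intro k; rw [← eA_eq]; exact hω5 k
  · rw [← c7A_eq]; exact hω6
  · rw [← gA_eq]; exact hω7

end Cor4

/-- **Corollary 4 (linear-algebraic content): K-user interference channel with one
(K-1)-antenna relay.** -/
theorem kuser_ic_single_multiantenna_relay_alignment (K : ℕ) (hK : 3 ≤ K) :
    ∀ᵐ hpq ∂(volume : Measure ((Fin K → Fin K → ℂ) ×
        (Fin K → Fin (K - 1) → ℂ) × (Fin K → Fin (K - 1) → ℂ))),
      ∃ U : Matrix (Fin (K - 1)) (Fin (K - 1)) ℂ, U ≠ 0 ∧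
        ∃ lam : Fin K → ℂ,
          ∀ k : Fin K,
            (∀ i, i ≠ k →
              hpq.2.2 k ⬝ᵥ U.mulVec (hpq.2.1 i) = lam k * hpq.1 k i) ∧
            hpq.2.2 k ⬝ᵥ U.mulVec (hpq.2.1 k) ≠ lam k * hpq.1 k k := by
  obtain ⟨m, rfl⟩ : ∃ m, K = m + 1 := ⟨K - 1, by omega⟩
  have hm : 0 < m := by omega
  exact Cor4.main_aux m hm
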